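/- Let R be a commutative ring, M an R-module, S a multiplicatively closed subset of R, and 𝔓 a prime ideal of the localization R_S. Then 𝔓 is weakly associated to the R_S-module M_S (i.e. 𝔓 is minimal among primes of R_S containing the annihilator of some element of M_S) if and only if the preimage 𝔓 ∩ R of 𝔓 in R is weakly associated to M. -/

import Mathlib

section Defs

variable (A L : Type*) [CommRing A] [AddCommGroup L] [Module A L]

/-- `a ∈ A` is a zero divisor for the module `L`:
`a • y = 0` for some `y ≠ 0` in `L`. -/
def IsZeroDivisorFor (a : A) : Prop := ∃ y : L, y ≠ 0 ∧ a • y = 0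

/-- `a ∈ A` is nilpotent for the module `L`: for every `y ∈ L` there is `n`
with `a ^ n • y = 0`. -/
def IsNilpotentFor (a : A) : Prop := ∀ y : L, ∃ n : ℕ, a ^ n • y = 0

/-- `L` is `q`-coprimary: `L ≠ 0`, every zero divisor for `L` lies in `q`,
and every element of `q` is nilpotent for `L`. -/
def IsCoprimaryFor (q : Ideal A) : Prop :=
  (∃ y : L, y ≠ 0) ∧ (∀ a : A, IsZeroDivisorFor A L a → a ∈ q) ∧
    ∀ a ∈ q, IsNilpotentFor A L a

/-- A submodule `N` of `L` is `q`-primary in `L` iff `L ⧸ N` is `q`-coprimary. -/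
def IsPrimaryIn (N : Submodule A L) (q : Ideal A) : Prop :=
  IsCoprimaryFor A (L ⧸ N) q

/-- The `S`-component of `N` in `L`: `{x ∈ L | ∃ s ∈ S, s • x ∈ N}`,
for an arbitrary subset `S ⊆ A`. -/
def sComp (S : Set A) (N : Submodule A L) : Set L := {x : L | ∃ s ∈ S, s • x ∈ N}

/-- A prime ideal `p` is Krull-associated to `L` iff for every multiplicatively
closed subset `T ⊋ A ∖ p` one has `T^L((0)) ⊋ (A ∖ p)^L((0))`. -/
def KrullAssociated (p : Ideal A) : Prop :=
  ∀ T : Submonoid A, ((p : Set A)ᶜ ⊂ (T : Set A)) →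
    sComp A L ((p : Set A)ᶜ) ⊥ ⊂ sComp A L (T : Set A) ⊥

end Defs

section Aux

variable {R M : Type*} [CommRing R] [AddCommGroup M] [Module R M] (S : Submonoid R)

lemma torsionOf_mk_eq_map (x : M) (s : S) :
    Ideal.torsionOf (Localization S) (LocalizedModule S M) (LocalizedModule.mk x s) =
      (Ideal.torsionOf R M x).map (algebraMap R (Localization S)) := by
  ext z
  induction z using Localization.induction_on with
  | H p =>
    obtain ⟨a, t⟩ := p
    rw [Ideal.mem_torsionOf_iff, Localization.mk_eq_mk',
      IsLocalization.mk'_mem_map_algebraMap_iff S, ← Localization.mk_eq_mk',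
      LocalizedModule.mk_smul_mk, ← LocalizedModule.zero_mk (1 : S),
      LocalizedModule.mk_eq]
    constructor
    · rintro ⟨u, hu⟩
      simp only [one_smul, smul_zero, Submonoid.smul_def, smul_smul] at hu
      exact ⟨(u : R), u.2, Ideal.mem_torsionOf_iff _ _ |>.mpr hu⟩
    · rintro ⟨u, hu, h⟩
      rw [Ideal.mem_torsionOf_iff] at h
      refine ⟨⟨u, hu⟩, ?_⟩
      simp only [one_smul, smul_zero, Submonoid.smul_def, smul_smul]
      exact h

lemma mem_minimalPrimes_map_iff (I : Ideal R) (𝔓 : Ideal (Localization S)) [h𝔓 : 𝔓.IsPrime] :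
    𝔓 ∈ (I.map (algebraMap R (Localization S))).minimalPrimes ↔
      𝔓.comap (algebraMap R (Localization S)) ∈ I.minimalPrimes := by
  obtain ⟨hp, hdisj⟩ := (IsLocalization.isPrime_iff_isPrime_disjoint S (Localization S) 𝔓).mp h𝔓
  constructor
  · rintro ⟨⟨-, hle⟩, hmin⟩
    refine ⟨⟨hp, Ideal.map_le_iff_le_comap.mp hle⟩, ?_⟩
    rintro q ⟨hq, hIq⟩ hqle
    have hdq : Disjoint (S : Set R) (q : Set R) :=
      Set.disjoint_of_subset_right hqle hdisj
    have hQprime := IsLocalization.isPrime_of_isPrime_disjoint S (Localization S) q hq hdq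
    have h1 : Ideal.map (algebraMap R (Localization S)) q ≤ 𝔓 := by
      calc Ideal.map (algebraMap R (Localization S)) q
          ≤ Ideal.map (algebraMap R (Localization S))
            (𝔓.comap (algebraMap R (Localization S))) := Ideal.map_mono hqle
        _ = 𝔓 := IsLocalization.map_comap S (Localization S) 𝔓
    have h2 := hmin ⟨hQprime, Ideal.map_mono hIq⟩ h1
    calc 𝔓.comap (algebraMap R (Localization S))
        ≤ (Ideal.map (algebraMap R (Localization S)) q).comap
          (algebraMap R (Localization S)) := Ideal.comap_mono h2
      _ = q := IsLocalization.comap_map_of_isPrime_disjoint S (Localization S) hq hdq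
  · rintro ⟨⟨-, hle⟩, hmin⟩
    refine ⟨⟨h𝔓, Ideal.map_le_iff_le_comap.mpr hle⟩, ?_⟩
    rintro Q ⟨hQ, hIQ⟩ hQle
    have h2 := hmin ⟨Ideal.IsPrime.comap _ (hK := hQ), Ideal.map_le_iff_le_comap.mp hIQ⟩
      (Ideal.comap_mono hQle)
    calc 𝔓 = Ideal.map (algebraMap R (Localization S))
            (𝔓.comap (algebraMap R (Localization S))) :=
          (IsLocalization.map_comap S (Localization S) 𝔓).symm
      _ ≤ Ideal.map (algebraMap R (Localization S))
            (Q.comap (algebraMap R (Localization S))) := Ideal.map_mono h2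
      _ = Q := IsLocalization.map_comap S (Localization S) Q

end Aux

/-- a prime `𝔓` of `R_S` is weakly associated to `M_S` iff its
preimage `𝔓 ∩ R` is weakly associated to `M`. -/
theorem statement12 {R M : Type*} [CommRing R] [AddCommGroup M] [Module R M]
    (S : Submonoid R) (𝔓 : Ideal (Localization S)) [𝔓.IsPrime] :
    (∃ y : LocalizedModule S M,
        𝔓 ∈ (Ideal.torsionOf (Localization S) (LocalizedModule S M) y).minimalPrimes) ↔
      ∃ x : M, 𝔓.comap (algebraMap R (Localization S)) ∈
        (Ideal.torsionOf R M x).minimalPrimes := by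
  constructor
  · rintro ⟨y, hy⟩
    induction y using LocalizedModule.induction_on with
    | _ x s =>
      rw [torsionOf_mk_eq_map S x s, mem_minimalPrimes_map_iff] at hy
      exact ⟨x, hy⟩
  · rintro ⟨x, hx⟩
    exact ⟨LocalizedModule.mk x 1, by
      rw [torsionOf_mk_eq_map S x 1, mem_minimalPrimes_map_iff]; exact hx⟩
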